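/- Let h : [0,T] → ℝᵐ be càdlàg, and let (tⁿ_k)_{0≤k≤k_n} be a sequence of subdivisions 0 = tⁿ₀ < tⁿ₁ < ⋯ < tⁿ_{k_n} = T such that max_i |tⁿ_{i+1} − tⁿ_i| → 0 and sup_{u ∈ [0,T] \ {tⁿ₀,…,tⁿ_{k_n}}} |Δh(u)| → 0 as n → ∞, where Δh(u) = h(u) − h(u⁻). Then the step functions h_n(u) := Σ_{i=0}^{k_n−1} h(tⁿ_i) 1_{[tⁿ_i, tⁿ_{i+1})}(u) + h(tⁿ_{k_n}) 1_{{tⁿ_{k_n}}}(u) converge to h uniformly on [0,T]. -/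
import Mathlib

open Filter Topology

/-- uniform approximation of a càdlàg function by step functions along
subdivisions whose mesh tends to zero and which eventually capture all jumps. -/
theorem stmt_14 {m : ℕ} (T : ℝ) (hT : 0 < T)
    (h : ℝ → EuclideanSpace ℝ (Fin m))
    -- h is càdlàg on [0,T]
    (hrc : ∀ u ∈ Set.Ico (0:ℝ) T, ContinuousWithinAt h (Set.Ici u) u)
    (hll : ∀ u ∈ Set.Ioc (0:ℝ) T, Tendsto h (𝓝[<] u) (𝓝 (Function.leftLim h u)))
    -- the subdivisions 0 = tⁿ₀ < tⁿ₁ < ⋯ < tⁿ_{k_n} = T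
    (k : ℕ → ℕ) (t : ℕ → ℕ → ℝ)
    (hk : ∀ n, 0 < k n)
    (ht0 : ∀ n, t n 0 = 0) (htT : ∀ n, t n (k n) = T)
    (hmono : ∀ n i, i < k n → t n i < t n (i + 1))
    -- the mesh tends to zero
    (hmesh : Tendsto (fun n => ⨆ i : Fin (k n), (t n ((i : ℕ) + 1) - t n (i : ℕ)))
      atTop (𝓝 0))
    -- the jumps outside the subdivision points tend to zero uniformly
    (hjump : Tendsto (fun n =>
        ⨆ u : {u : ℝ // u ∈ Set.Icc (0:ℝ) T ∧ ∀ i ≤ k n, (u : ℝ) ≠ t n i},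
          ‖h (u : ℝ) - Function.leftLim h (u : ℝ)‖)
      atTop (𝓝 0))
    -- hn is the associated sequence of step functions
    (hn : ℕ → ℝ → EuclideanSpace ℝ (Fin m))
    (hstep : ∀ n i, i < k n → ∀ u ∈ Set.Ico (t n i) (t n (i + 1)), hn n u = h (t n i))
    (hend : ∀ n, hn n T = h T) :
    Tendsto (fun n => ⨆ u : Set.Icc (0:ℝ) T, ‖h (u : ℝ) - hn n (u : ℝ)‖)
      atTop (𝓝 0) := by
  classical
  have h0mem : (0:ℝ) ∈ Set.Icc (0:ℝ) T := ⟨le_refl _, hT.le⟩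
  haveI : Nonempty (Set.Icc (0:ℝ) T) := ⟨⟨0, h0mem⟩⟩
  -- Step 1: h is bounded on [0,T]
  have key : ∀ u : ℝ, ∃ U : Set ℝ, IsOpen U ∧ u ∈ U ∧ ∃ Mu : ℝ,
      ∀ v ∈ U ∩ Set.Icc (0:ℝ) T, ‖h v‖ ≤ Mu := by
    intro u
    by_cases hu : u ∈ Set.Icc (0:ℝ) T
    · -- right part
      obtain ⟨V, hVo, huV, hVb⟩ : ∃ V, IsOpen V ∧ u ∈ V ∧
          ∀ v, v ∈ V → v ∈ Set.Ici u → v ∈ Set.Icc (0:ℝ) T → ‖h v‖ ≤ ‖h u‖ + 1 := by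
        rcases eq_or_lt_of_le hu.2 with hT' | hT'
        · refine ⟨Set.univ, isOpen_univ, trivial, fun v _ hv1 hv2 => ?_⟩
          have : v = u := le_antisymm (hT' ▸ hv2.2) hv1
          rw [this]
          linarith
        · have hc : Tendsto h (𝓝[Set.Ici u] u) (𝓝 (h u)) := hrc u ⟨hu.1, hT'⟩
          have hev : {v | ‖h v‖ ≤ ‖h u‖ + 1} ∈ 𝓝[Set.Ici u] u := by
            exact hc.norm.eventually (ge_mem_nhds (by linarith : ‖h u‖ < ‖h u‖ + 1))
          obtain ⟨V, hVo, huV, hsub⟩ := mem_nhdsWithin.mp hev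
          exact ⟨V, hVo, huV, fun v hv1 hv2 _ => hsub ⟨hv1, hv2⟩⟩
      -- left part
      obtain ⟨W, hWo, huW, MW, hWb⟩ : ∃ W, IsOpen W ∧ u ∈ W ∧ ∃ MW,
          ∀ v, v ∈ W → v ∈ Set.Iio u → v ∈ Set.Icc (0:ℝ) T → ‖h v‖ ≤ MW := by
        rcases eq_or_lt_of_le hu.1 with h0 | h0
        · refine ⟨Set.univ, isOpen_univ, trivial, 0, fun v _ hv1 hv2 => ?_⟩
          exact absurd (lt_of_lt_of_le (h0 ▸ hv1) hv2.1) (lt_irrefl v)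
        · have hc := hll u ⟨h0, hu.2⟩
          have hev : {v | ‖h v‖ ≤ ‖Function.leftLim h u‖ + 1} ∈ 𝓝[<] u := by
            have := hc.norm.eventually
              (ge_mem_nhds (by linarith [norm_nonneg (Function.leftLim h u)] :
                ‖Function.leftLim h u‖ < ‖Function.leftLim h u‖ + 1))
            exact this
          obtain ⟨W, hWo, huW, hsub⟩ := mem_nhdsWithin.mp hev
          exact ⟨W, hWo, huW, _, fun v hv1 hv2 _ => hsub ⟨hv1, hv2⟩⟩
      refine ⟨V ∩ W, hVo.inter hWo, ⟨huV, huW⟩, max (‖h u‖ + 1) MW, fun v hv => ?_⟩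
      rcases le_or_gt u v with hc | hc
      · exact le_trans (hVb v hv.1.1 hc hv.2) (le_max_left _ _)
      · exact le_trans (hWb v hv.1.2 hc hv.2) (le_max_right _ _)
    · refine ⟨(Set.Icc (0:ℝ) T)ᶜ, isClosed_Icc.isOpen_compl, hu, 0, ?_⟩
      rintro v ⟨hv1, hv2⟩
      exact absurd hv2 hv1
  choose U hUo hUmem Mu hMu using key
  obtain ⟨s, -, hscov⟩ := isCompact_Icc.elim_nhds_subcover U
    (fun x _ => (hUo x).mem_nhds (hUmem x))
  have hs_ne : s.Nonempty := by
    rcases Set.mem_iUnion₂.mp (hscov h0mem) with ⟨x, hx, -⟩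
    exact ⟨x, hx⟩
  set M := s.sup' hs_ne Mu with hMdef
  have hM : ∀ u ∈ Set.Icc (0:ℝ) T, ‖h u‖ ≤ M := by
    intro v hv
    rcases Set.mem_iUnion₂.mp (hscov hv) with ⟨x, hxs, hxv⟩
    exact (hMu x v ⟨hxv, hv⟩).trans (Finset.le_sup' Mu hxs)
  have hLbound : ∀ u ∈ Set.Ioc (0:ℝ) T, ‖Function.leftLim h u‖ ≤ M := by
    intro u hu
    refine le_of_tendsto (hll u hu).norm ?_
    filter_upwards [Ioo_mem_nhdsLT_of_mem (⟨hu.1, le_refl u⟩ : u ∈ Set.Ioc (0:ℝ) u)]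
      with v hv
    exact hM v ⟨hv.1.le, hv.2.le.trans hu.2⟩
  -- monotonicity of the grid
  have tmono : ∀ n a b, a ≤ b → b ≤ k n → t n a ≤ t n b := by
    intro n a b hab
    induction b, hab using Nat.le_induction with
    | base => intro _; exact le_rfl
    | succ b hb ih =>
      intro hbk
      exact le_trans (ih (Nat.le_of_succ_le hbk))
        (le_of_lt (hmono n b (Nat.lt_of_succ_le hbk)))
  -- locating a point in the grid
  have loc : ∀ n u, 0 ≤ u → u < T → ∃ i, i < k n ∧ t n i ≤ u ∧ u < t n (i+1) := by
    intro n u h0 huT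
    have hP0 : t n 0 ≤ u := by rw [ht0]; exact h0
    set i := Nat.findGreatest (fun i => t n i ≤ u) (k n) with hi
    have hPi : t n i ≤ u :=
      Nat.findGreatest_spec (P := fun i => t n i ≤ u) (Nat.zero_le _) hP0
    have hik : i ≤ k n := Nat.findGreatest_le _
    have hlt : i < k n := by
      rcases eq_or_lt_of_le hik with he | hl
      · exfalso
        rw [he, htT n] at hPi
        linarith
      · exact hl
    refine ⟨i, hlt, hPi, ?_⟩
    by_contra hle
    push_neg at hle
    exact Nat.findGreatest_is_greatest (Nat.lt_succ_self i) (Nat.succ_le_of_lt hlt) hle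
  -- main argument, by contradiction
  by_contra hcon
  set f := fun n => ⨆ u : Set.Icc (0:ℝ) T, ‖h (u:ℝ) - hn n (u:ℝ)‖ with hf
  have hf0 : ∀ n, 0 ≤ f n := fun n => Real.iSup_nonneg fun u => norm_nonneg _
  rw [Metric.tendsto_atTop] at hcon
  push_neg at hcon
  obtain ⟨ε, hε, hfreq⟩ := hcon
  obtain ⟨φ, hφ, hφε⟩ := Filter.extraction_of_frequently_atTop
    (Filter.frequently_atTop.mpr hfreq)
  have hφε' : ∀ j, ε ≤ f (φ j) := by
    intro j
    have := hφε j
    rwa [Real.dist_eq, sub_zero, abs_of_nonneg (hf0 _)] at this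
  -- pick witnesses
  have hpick : ∀ j, ∃ w, w ∈ Set.Icc (0:ℝ) T ∧ w < T ∧ ∃ i, i < k (φ j) ∧
      t (φ j) i ≤ w ∧ w < t (φ j) (i+1) ∧ ε/2 < ‖h w - h (t (φ j) i)‖ := by
    intro j
    have hlt : ε/2 < f (φ j) := lt_of_lt_of_le (by linarith) (hφε' j)
    rw [hf] at hlt
    obtain ⟨⟨w, hwm⟩, hgap⟩ := exists_lt_of_lt_ciSup hlt
    have hgap' : ε/2 < ‖h w - hn (φ j) w‖ := hgap
    have hwT : w < T := by
      rcases eq_or_lt_of_le hwm.2 with he | hl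
      · exfalso
        rw [he, hend (φ j)] at hgap'
        simp at hgap'
        linarith
      · exact hl
    obtain ⟨i, hik, hle, hltw⟩ := loc (φ j) w hwm.1 hwT
    have := hstep (φ j) i hik w ⟨hle, hltw⟩
    rw [this] at hgap'
    exact ⟨w, hwm, hwT, i, hik, hle, hltw, hgap'⟩
  choose w hwmem hwlt I hIk hIle hIlt hgap using hpick
  set v := fun j => t (φ j) (I j) with hvdef
  have hv0 : ∀ j, 0 ≤ v j := by
    intro j
    have := tmono (φ j) 0 (I j) (Nat.zero_le _) (le_of_lt (hIk j))
    rwa [ht0] at this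
  -- w - v → 0
  have hd0 : Tendsto (fun j => w j - v j) atTop (𝓝 0) := by
    refine squeeze_zero (fun j => by linarith [hIle j]) (fun j => ?_)
      (hmesh.comp hφ.tendsto_atTop)
    have hle' : w j - v j ≤ t (φ j) (I j + 1) - t (φ j) (I j) := by
      have := hIlt j
      have := hIle j
      simp only [hvdef]
      linarith
    refine hle'.trans ?_
    have hbdd : BddAbove (Set.range fun i : Fin (k (φ j)) =>
        t (φ j) ((i:ℕ)+1) - t (φ j) (i:ℕ)) := (Set.finite_range _).bddAbove
    exact le_ciSup hbdd ⟨I j, hIk j⟩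
  -- compactness
  obtain ⟨a, haI, ψ, hψ, hwa⟩ := isCompact_Icc.tendsto_subseq hwmem
  have hva : Tendsto (fun j => v (ψ j)) atTop (𝓝 a) := by
    have hd := hd0.comp hψ.tendsto_atTop
    have heq : (fun j => v (ψ j)) =
        fun j => (w ∘ ψ) j - ((fun j => w j - v j) ∘ ψ) j := by
      funext j
      simp [Function.comp]
    rw [heq]
    simpa using hwa.sub hd
  -- convergence helpers
  have conv_right : ∀ (x : ℕ → ℝ), a < T → (∀ j, a ≤ x j) →
      Tendsto x atTop (𝓝 a) → Tendsto (fun j => h (x j)) atTop (𝓝 (h a)) := by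
    intro x haT hax hxa
    have hc : Tendsto h (𝓝[Set.Ici a] a) (𝓝 (h a)) := hrc a ⟨haI.1, haT⟩
    exact hc.comp (tendsto_nhdsWithin_of_tendsto_nhds_of_eventually_within x hxa
      (Eventually.of_forall hax))
  have conv_left : ∀ (x : ℕ → ℝ), 0 < a → (∀ j, x j < a) →
      Tendsto x atTop (𝓝 a) →
      Tendsto (fun j => h (x j)) atTop (𝓝 (Function.leftLim h a)) := by
    intro x ha0 hax hxa
    exact (hll a ⟨ha0, haI.2⟩).comp
      (tendsto_nhdsWithin_of_tendsto_nhds_of_eventually_within x hxa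
        (Eventually.of_forall hax))
  have key2 : ∀ (x y : ℕ → ℝ) (Lx Ly : EuclideanSpace ℝ (Fin m)),
      Tendsto (fun j => h (x j)) atTop (𝓝 Lx) →
      Tendsto (fun j => h (y j)) atTop (𝓝 Ly) →
      (∀ j, ε/2 < ‖h (x j) - h (y j)‖) → ε/2 ≤ ‖Lx - Ly‖ := by
    intro x y Lx Ly hx hy hg
    exact ge_of_tendsto' (hx.sub hy).norm fun j => (hg j).le
  -- trichotomy
  have htri : ∀ j, (a ≤ v (ψ j)) ∨ (w (ψ j) < a) ∨ (v (ψ j) < a ∧ a ≤ w (ψ j)) := by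
    intro j
    rcases le_or_gt a (v (ψ j)) with h1 | h1
    · exact Or.inl h1
    rcases lt_or_ge (w (ψ j)) a with h2 | h2
    · exact Or.inr (Or.inl h2)
    · exact Or.inr (Or.inr ⟨h1, h2⟩)
  have hfreq3 := (Filter.Eventually.frequently
    (Eventually.of_forall htri : ∀ᶠ j in atTop, _))
  rcases Filter.frequently_or_distrib.mp hfreq3 with hA | hBC
  · -- case A : a ≤ v, both from the right
    obtain ⟨θ, hθ, hAθ⟩ := Filter.extraction_of_frequently_atTop hA
    have haT : a < T := lt_of_le_of_lt (le_trans (hAθ 0) (hIle (ψ (θ 0)))) (hwlt _)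
    have hx := conv_right (fun j => w (ψ (θ j))) haT
      (fun j => le_trans (hAθ j) (hIle (ψ (θ j)))) (hwa.comp hθ.tendsto_atTop)
    have hy := conv_right (fun j => v (ψ (θ j))) haT (fun j => hAθ j)
      (hva.comp hθ.tendsto_atTop)
    have := key2 _ _ _ _ hx hy (fun j => hgap (ψ (θ j)))
    simp at this
    linarith
  rcases Filter.frequently_or_distrib.mp hBC with hB | hC
  · -- case B : w < a, both from the left
    obtain ⟨θ, hθ, hBθ⟩ := Filter.extraction_of_frequently_atTop hB
    have ha0 : 0 < a := lt_of_le_of_lt (hwmem (ψ (θ 0))).1 (hBθ 0)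
    have hx := conv_left (fun j => w (ψ (θ j))) ha0 (fun j => hBθ j)
      (hwa.comp hθ.tendsto_atTop)
    have hy := conv_left (fun j => v (ψ (θ j))) ha0
      (fun j => lt_of_le_of_lt (hIle (ψ (θ j))) (hBθ j)) (hva.comp hθ.tendsto_atTop)
    have := key2 _ _ _ _ hx hy (fun j => hgap (ψ (θ j)))
    simp at this
    linarith
  · -- case C : v < a ≤ w, jump at a
    obtain ⟨θ, hθ, hCθ⟩ := Filter.extraction_of_frequently_atTop hC
    have ha0 : 0 < a := lt_of_le_of_lt (hv0 (ψ (θ 0))) (hCθ 0).1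
    have haT : a < T := lt_of_le_of_lt (hCθ 0).2 (hwlt _)
    have hx := conv_right (fun j => w (ψ (θ j))) haT (fun j => (hCθ j).2)
      (hwa.comp hθ.tendsto_atTop)
    have hy := conv_left (fun j => v (ψ (θ j))) ha0 (fun j => (hCθ j).1)
      (hva.comp hθ.tendsto_atTop)
    have hJ : ε/2 ≤ ‖h a - Function.leftLim h a‖ :=
      key2 _ _ _ _ hx hy (fun j => hgap (ψ (θ j)))
    -- contradiction with hjump
    have hjump2 := hjump.comp ((hφ.comp (hψ.comp hθ)).tendsto_atTop)
    have hev : ∀ᶠ j in atTop,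
        (⨆ u : {u : ℝ // u ∈ Set.Icc (0:ℝ) T ∧
            ∀ i ≤ k (φ (ψ (θ j))), (u : ℝ) ≠ t (φ (ψ (θ j))) i},
          ‖h (u : ℝ) - Function.leftLim h (u : ℝ)‖) < ε/2 :=
      hjump2.eventually (gt_mem_nhds (by linarith : (0:ℝ) < ε/2))
    obtain ⟨j, hj⟩ := hev.exists
    set N := φ (ψ (θ j)) with hNdef
    have hane : ∀ i ≤ k N, a ≠ t N i := by
      intro i' hi' heq
      rcases le_or_gt i' (I (ψ (θ j))) with hle | hlt
      · have h1 : t N i' ≤ t N (I (ψ (θ j))) := tmono N _ _ hle (le_of_lt (hIk _))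
        have h2 : t N (I (ψ (θ j))) < a := (hCθ j).1
        have : t N i' < a := lt_of_le_of_lt h1 h2
        exact absurd heq this.ne'
      · have h1 : t N (I (ψ (θ j)) + 1) ≤ t N i' := tmono N _ _ hlt hi'
        have h2 : a < t N (I (ψ (θ j)) + 1) := lt_of_le_of_lt (hCθ j).2 (hIlt _)
        exact absurd heq (ne_of_lt (lt_of_lt_of_le h2 h1))
    have hbdd : BddAbove (Set.range fun u : {u : ℝ // u ∈ Set.Icc (0:ℝ) T ∧
        ∀ i ≤ k N, (u : ℝ) ≠ t N i} =>
        ‖h (u:ℝ) - Function.leftLim h (u:ℝ)‖) := by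
      refine ⟨M + M, ?_⟩
      rintro x ⟨⟨u, hu, hne⟩, rfl⟩
      have hu0 : 0 < u := by
        have := hne 0 (Nat.zero_le _)
        rw [ht0] at this
        exact lt_of_le_of_ne hu.1 (Ne.symm this)
      calc ‖h u - Function.leftLim h u‖ ≤ ‖h u‖ + ‖Function.leftLim h u‖ :=
            norm_sub_le _ _
        _ ≤ M + M := add_le_add (hM u hu) (hLbound u ⟨hu0, hu.2⟩)
    have hle2 : ‖h a - Function.leftLim h a‖ ≤
        ⨆ u : {u : ℝ // u ∈ Set.Icc (0:ℝ) T ∧ ∀ i ≤ k N, (u : ℝ) ≠ t N i},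
          ‖h (u:ℝ) - Function.leftLim h (u:ℝ)‖ :=
      le_ciSup hbdd ⟨a, haI, hane⟩
    linarith
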